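/- Let n ≥ 3, let M be a connected topological (n−1)-manifold, and let r : M → ℝⁿ be a continuous map that is locally convex at every point of M. Then any two points p, q ∈ M can be connected by a continuous path γ : [0,1] → M with γ(0) = p and γ(1) = q such that r ∘ γ has finite total variation (finite length); in particular d_r(p,q) < ∞ for all p, q ∈ M, and M is path-connected. -/

import Mathlib

open scoped RealInnerProductSpace ENNReal
open Set

/-- Euclidean `n`-space `ℝⁿ`. -/
noncomputable abbrev Euc (n : ℕ) : Type := EuclideanSpace ℝ (Fin n)

/-- `M` is a topological `d`-manifold: every point has an open neighborhood
homeomorphic to `ℝ^d` (Hausdorffness is assumed separately via `T2Space`). -/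
def IsTopManifoldOfDim (M : Type*) [TopologicalSpace M] (d : ℕ) : Prop :=
  ∀ p : M, ∃ U : Set M, IsOpen U ∧ p ∈ U ∧ Nonempty (U ≃ₜ Euc d)

/-- `r : M → ℝⁿ` is locally convex at `p` (in the sense of Bouligand): some open
neighborhood `U` of `p` is mapped by `r` homeomorphically onto an open subset `V` of
the frontier of a closed convex body `K`, with `r p ∈ V`. -/
def IsLocallyConvexAt {M : Type*} [TopologicalSpace M] {n : ℕ}
    (r : M → Euc n) (p : M) : Prop :=
  ∃ (U : Set M) (K V : Set (Euc n)),
    IsOpen U ∧ p ∈ U ∧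
    IsClosed K ∧ Convex ℝ K ∧ (interior K).Nonempty ∧
    V ⊆ frontier K ∧ r p ∈ V ∧ (∃ W : Set (Euc n), IsOpen W ∧ V = W ∩ frontier K) ∧
    ∃ e : U ≃ₜ V, ∀ x : U, (e x : Euc n) = r x

/-- `r : M → ℝⁿ` is strictly locally convex at `p`: locally convex at `p`, where
moreover the convex body `K` can be chosen together with a nonzero vector `u` such that
`K \ {r p}` lies in the open half-space `{x | ⟪x - r p, u⟫ > 0}`. -/
def IsStrictlyLocallyConvexAt {M : Type*} [TopologicalSpace M] {n : ℕ}
    (r : M → Euc n) (p : M) : Prop :=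
  ∃ (U : Set M) (K V : Set (Euc n)) (u : Euc n),
    u ≠ 0 ∧ (∀ x ∈ K \ {r p}, 0 < ⟪x - r p, u⟫) ∧
    IsOpen U ∧ p ∈ U ∧
    IsClosed K ∧ Convex ℝ K ∧ (interior K).Nonempty ∧
    V ⊆ frontier K ∧ r p ∈ V ∧ (∃ W : Set (Euc n), IsOpen W ∧ V = W ∩ frontier K) ∧
    ∃ e : U ≃ₜ V, ∀ x : U, (e x : Euc n) = r x

/-- The length (total variation) of the image under `r` of a path `γ` in `M`. -/
noncomputable def pathLength {M : Type*} [TopologicalSpace M] {n : ℕ}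
    (r : M → Euc n) {p q : M} (γ : Path p q) : ℝ≥0∞ :=
  eVariationOn (fun t => r (γ t)) Set.univ

/-- The length pseudometric on `M` induced by `r`. -/
noncomputable def lengthDist {M : Type*} [TopologicalSpace M] {n : ℕ}
    (r : M → Euc n) (p q : M) : ℝ≥0∞ :=
  ⨅ γ : Path p q, pathLength r γ

/-- `M` is complete with respect to the induced length pseudometric: every sequence
that is Cauchy for `lengthDist r` converges in the topology of `M`. -/
def CompleteWrtLengthDist {M : Type*} [TopologicalSpace M] {n : ℕ}
    (r : M → Euc n) : Prop :=
  ∀ x : ℕ → M,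
    (∀ ε : ℝ≥0∞, 0 < ε → ∃ N : ℕ, ∀ m ≥ N, ∀ k ≥ N, lengthDist r (x m) (x k) < ε) →
    ∃ p : M, Filter.Tendsto x Filter.atTop (nhds p)

section PathLengthLemmas

variable {M : Type*} [TopologicalSpace M] {n : ℕ} (r : M → Euc n)

lemma pathLength_eq_real {p q : M} (γ : Path p q) :
    pathLength r γ = eVariationOn (fun t : ℝ => r (γ.extend t)) (Icc 0 1) := by
  have hmono : MonotoneOn (Subtype.val : unitInterval → ℝ) univ := fun x _ y _ h => h
  have h := eVariationOn.comp_eq_of_monotoneOn (fun t : ℝ => r (γ.extend t))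
    (Subtype.val : unitInterval → ℝ) hmono
  have himg : (Subtype.val : unitInterval → ℝ) '' univ = Icc 0 1 := by
    rw [image_univ, Subtype.range_coe]
  rw [himg] at h
  rw [← h]
  unfold pathLength
  congr 1
  funext t
  simp [γ.extend_extends']

lemma pathLength_refl (p : M) : pathLength r (Path.refl p) = 0 := by
  apply eVariationOn.constant_on
  rintro x ⟨t, -, rfl⟩ y ⟨u, -, rfl⟩
  simp

lemma pathLength_symm {p q : M} (γ : Path p q) : pathLength r γ.symm = pathLength r γ := by
  rw [pathLength_eq_real r γ.symm, pathLength_eq_real r γ]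
  have hanti : AntitoneOn (fun t : ℝ => 1 - t) (Icc (0:ℝ) 1) := fun x _ y _ h => by dsimp only; linarith
  have key : EqOn (fun t : ℝ => r (γ.symm.extend t))
      ((fun t : ℝ => r (γ.extend t)) ∘ (fun t : ℝ => 1 - t)) (Icc 0 1) := by
    intro t ht
    have ht' : 1 - t ∈ Icc (0:ℝ) 1 := ⟨by linarith [ht.2], by linarith [ht.1]⟩
    simp only [Function.comp_apply]
    rw [γ.symm.extend_apply ht, γ.extend_apply ht']
    show r (γ (unitInterval.symm ⟨t, ht⟩)) = r (γ ⟨1 - t, ht'⟩)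
    exact congrArg r (congrArg γ (Subtype.ext (by simp [unitInterval.symm])))
  rw [eVariationOn.eq_of_eqOn key,
    eVariationOn.comp_eq_of_antitoneOn (fun t : ℝ => r (γ.extend t)) _ hanti,
    image_const_sub_Icc]
  norm_num

lemma pathLength_trans {p q s : M} (γ : Path p q) (γ' : Path q s) :
    pathLength r (γ.trans γ') = pathLength r γ + pathLength r γ' := by
  rw [pathLength_eq_real r (γ.trans γ'), pathLength_eq_real r γ, pathLength_eq_real r γ']
  set f : ℝ → Euc n := fun t => r ((γ.trans γ').extend t) with hf
  have h2 : (1:ℝ)/2 ∈ Icc (0:ℝ) 1 := by norm_num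
  have hIcc := eVariationOn.Icc_add_Icc f (s := Icc (0:ℝ) 1)
    (by norm_num : (0:ℝ) ≤ 1/2) (by norm_num : (1:ℝ)/2 ≤ 1) h2
  rw [inter_eq_self_of_subset_right (Icc_subset_Icc le_rfl (by norm_num)),
    inter_eq_self_of_subset_right (Icc_subset_Icc (by norm_num) le_rfl),
    inter_self] at hIcc
  rw [← hIcc]
  congr 1
  · -- first half
    have e1 : EqOn f ((fun t : ℝ => r (γ.extend t)) ∘ (fun t : ℝ => 2 * t)) (Icc 0 (1/2)) := by
      intro t ht
      have htI : t ∈ Icc (0:ℝ) 1 := ⟨ht.1, le_trans ht.2 (by norm_num)⟩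
      simp only [Function.comp_apply, hf]
      rw [Path.extend_apply _ htI]
      refine congrArg r ?_
      show (if t ≤ 1/2 then γ.extend (2*t) else γ'.extend (2*t-1)) = γ.extend (2 * t)
      rw [if_pos ht.2]
    have hmono : MonotoneOn (fun t : ℝ => 2 * t) (Icc (0:ℝ) (1/2)) :=
      fun x _ y _ h => by dsimp only; linarith
    rw [eVariationOn.eq_of_eqOn e1,
      eVariationOn.comp_eq_of_monotoneOn (fun t : ℝ => r (γ.extend t)) _ hmono,
      image_mul_left_Icc' two_pos]
    norm_num
  · -- second half
    have e2 : EqOn f ((fun t : ℝ => r (γ'.extend t)) ∘ (fun t : ℝ => 2 * t - 1))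
        (Icc (1/2) 1) := by
      intro t ht
      have htI : t ∈ Icc (0:ℝ) 1 := ⟨le_trans (by norm_num) ht.1, ht.2⟩
      simp only [Function.comp_apply, hf]
      rw [Path.extend_apply _ htI]
      refine congrArg r ?_
      show (if t ≤ 1/2 then γ.extend (2*t) else γ'.extend (2*t-1)) = γ'.extend (2 * t - 1)
      by_cases h : t ≤ 1/2
      · rw [if_pos h]
        have hteq : t = 1/2 := le_antisymm h ht.1
        subst hteq
        norm_num
      · rw [if_neg h]
    have hmono : MonotoneOn (fun t : ℝ => 2 * t - 1) (Icc (1/2:ℝ) 1) :=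
      fun x _ y _ h => by dsimp only; linarith
    rw [eVariationOn.eq_of_eqOn e2,
      eVariationOn.comp_eq_of_monotoneOn (fun t : ℝ => r (γ'.extend t)) _ hmono]
    have himg : (fun t : ℝ => 2 * t - 1) '' Icc (1/2) 1 = Icc 0 1 := by
      rw [show (fun t : ℝ => 2 * t - 1) = (fun x : ℝ => x - 1) ∘ (fun t : ℝ => 2 * t) from rfl,
        image_comp, image_mul_left_Icc' two_pos, image_sub_const_Icc]
      norm_num
    rw [himg]

end PathLengthLemmas

section Local

variable {M : Type*} [TopologicalSpace M] {n : ℕ}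

set_option maxHeartbeats 1000000 in
lemma exists_good_nbhd (r : M → Euc n) (hr : Continuous r) (p : M)
    (hp : IsLocallyConvexAt r p) :
    ∃ N : Set M, IsOpen N ∧ p ∈ N ∧ ∀ q ∈ N, ∃ γ : Path p q, pathLength r γ < ⊤ := by
  obtain ⟨U, K, V, hU, hpU, hKcl, hKconv, hKint, hVfr, hrpV, ⟨W, hW, hVW⟩, e, he⟩ := hp
  set a : Euc n := r p with ha
  obtain ⟨z, hz⟩ := hKint
  obtain ⟨ε, hε, hball⟩ : ∃ ε > 0, Metric.ball z ε ⊆ K := by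
    rcases Metric.mem_nhds_iff.1 (mem_interior_iff_mem_nhds.1 hz) with ⟨ε, hε, h⟩
    exact ⟨ε, hε, h⟩
  set s : Set (Euc n) := (Homeomorph.addRight z) ⁻¹' K with hs_def
  have hmem : ∀ x : Euc n, x ∈ s ↔ x + z ∈ K := fun x => Iff.rfl
  have hs_conv : Convex ℝ s := by
    intro x hx y hy aθ bθ haθ hbθ hab
    have h1 : aθ • (x + z) + bθ • (y + z) = aθ • x + bθ • y + z := by
      rw [smul_add, smul_add, add_add_add_comm, ← add_smul, hab, one_smul]
    show aθ • x + bθ • y + z ∈ K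
    rw [← h1]
    exact hKconv hx hy haθ hbθ hab
  have hball0 : Metric.ball (0 : Euc n) ε ⊆ s := by
    intro y hy
    show y + z ∈ K
    apply hball
    rw [Metric.mem_ball, dist_eq_norm, add_sub_cancel_right]
    simpa [Metric.mem_ball, dist_eq_norm] using hy
  have hs0 : s ∈ nhds (0 : Euc n) :=
    Filter.mem_of_superset (Metric.ball_mem_nhds 0 hε) hball0
  set g : Euc n → ℝ := gauge s with hg_def
  have hfr : ∀ x : Euc n, x + z ∈ frontier K ↔ g x = 1 := by
    intro x
    rw [hg_def, gauge_eq_one_iff_mem_frontier hs_conv hs0, hs_def,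
      ← (Homeomorph.addRight z).preimage_frontier K]
    exact Iff.rfl
  set εn : NNReal := ⟨ε, hε.le⟩ with hεn
  have hLip : LipschitzWith εn⁻¹ g :=
    hs_conv.lipschitzWith_gauge (by exact_mod_cast hε) hball0
  have hgdist : ∀ x y : Euc n, |g x - g y| ≤ ε⁻¹ * ‖x - y‖ := by
    intro x y
    have h := hLip.dist_le_mul x y
    rw [Real.dist_eq, dist_eq_norm] at h
    rw [NNReal.coe_inv] at h
    exact h
  have hafr : a ∈ frontier K := hVfr hrpV
  have hga : g (a - z) = 1 := by rw [← hfr, sub_add_cancel]; exact hafr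
  have haW : a ∈ W := by rw [hVW] at hrpV; exact hrpV.1
  obtain ⟨ρ, hρ, hρW⟩ : ∃ ρ > 0, Metric.ball a ρ ⊆ W :=
    Metric.mem_nhds_iff.1 (hW.mem_nhds haW)
  set R : ℝ := ‖a - z‖ + 1 with hR
  have hR1 : (1:ℝ) ≤ R := le_add_of_nonneg_left (norm_nonneg _)
  have hR0 : (0:ℝ) < R := lt_of_lt_of_le one_pos hR1
  have hεinv : (0:ℝ) ≤ ε⁻¹ := inv_nonneg.2 hε.le
  set δ : ℝ := min (min (ε/2) 1) (ρ / (4 * ε⁻¹ * R + 2)) with hδdef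
  have hden : (0:ℝ) < 4 * ε⁻¹ * R + 2 := by positivity
  have hδpos : 0 < δ := lt_min (lt_min (by positivity) one_pos) (by positivity)
  have hδ1 : δ ≤ 1 := le_trans (min_le_left _ _) (min_le_right _ _)
  have hδε : ε⁻¹ * δ ≤ 1/2 := by
    have h1 : δ ≤ ε/2 := le_trans (min_le_left _ _) (min_le_left _ _)
    calc ε⁻¹ * δ ≤ ε⁻¹ * (ε/2) := by gcongr
    _ = 1/2 := by field_simp
  have hδρ : δ * (4 * ε⁻¹ * R + 2) ≤ ρ := by
    have h := min_le_right (min (ε/2) 1) (ρ / (4 * ε⁻¹ * R + 2))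
    calc δ * (4 * ε⁻¹ * R + 2) ≤ (ρ / (4 * ε⁻¹ * R + 2)) * (4 * ε⁻¹ * R + 2) := by
          gcongr
    _ = ρ := div_mul_cancel₀ _ hden.ne'
  -- bounds on the gauge on the closed ball
  have hgx : ∀ x ∈ Metric.closedBall a δ,
      1/2 ≤ g (x - z) ∧ g (x - z) ≤ 3/2 ∧ ‖x - z‖ ≤ R := by
    intro x hx
    have hxa : ‖x - a‖ ≤ δ := by rwa [Metric.mem_closedBall, dist_eq_norm] at hx
    have h1 : |g (x - z) - g (a - z)| ≤ ε⁻¹ * δ := by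
      calc |g (x - z) - g (a - z)| ≤ ε⁻¹ * ‖(x - z) - (a - z)‖ := hgdist _ _
      _ = ε⁻¹ * ‖x - a‖ := by rw [sub_sub_sub_cancel_right]
      _ ≤ ε⁻¹ * δ := by gcongr
    rw [hga] at h1
    have h1' := abs_le.1 (h1.trans hδε)
    refine ⟨by linarith [h1'.1], by linarith [h1'.2], ?_⟩
    calc ‖x - z‖ = ‖(x - a) + (a - z)‖ := by rw [sub_add_sub_cancel]
    _ ≤ ‖x - a‖ + ‖a - z‖ := norm_add_le _ _
    _ ≤ R := by rw [hR]; linarith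
  -- the radial projection
  set P : Euc n → Euc n := fun x => z + (g (x - z))⁻¹ • (x - z) with hP
  have hPsub : ∀ x : Euc n, P x - z = (g (x - z))⁻¹ • (x - z) := by
    intro x; rw [hP]; simp
  have hPfr : ∀ x : Euc n, g (x - z) ≠ 0 → P x ∈ frontier K := by
    intro x hne
    have h1 : g (P x - z) = 1 := by
      rw [hPsub x, hg_def, gauge_smul_of_nonneg (inv_nonneg.2 (gauge_nonneg _)),
        smul_eq_mul, inv_mul_cancel₀ hne]
    have h2 := (hfr (P x - z)).2 h1
    rwa [sub_add_cancel] at h2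
  have hPfix : ∀ x : Euc n, g (x - z) = 1 → P x = x := by
    intro x h
    rw [hP]
    simp only [h, inv_one, one_smul]
    abel
  -- Lipschitz bound for P on the closed ball
  have hPdist : ∀ x ∈ Metric.closedBall a δ, ∀ y ∈ Metric.closedBall a δ,
      ‖P x - P y‖ ≤ (2 + 4 * ε⁻¹ * R) * ‖x - y‖ := by
    intro x hx y hy
    obtain ⟨hux, hux', hxR⟩ := hgx x hx
    obtain ⟨huy, huy', hyR⟩ := hgx y hy
    set u : ℝ := g (x - z) with hu
    set v : ℝ := g (y - z) with hv
    have hu0 : (0:ℝ) < u := lt_of_lt_of_le (by norm_num) hux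
    have hv0 : (0:ℝ) < v := lt_of_lt_of_le (by norm_num) huy
    have key : P x - P y = u⁻¹ • (x - y) + (u⁻¹ - v⁻¹) • (y - z) := by
      rw [hP]
      simp only
      rw [← hu, ← hv]
      module
    calc ‖P x - P y‖ ≤ ‖u⁻¹ • (x - y)‖ + ‖(u⁻¹ - v⁻¹) • (y - z)‖ := by
          rw [key]; exact norm_add_le _ _
    _ = u⁻¹ * ‖x - y‖ + |u⁻¹ - v⁻¹| * ‖y - z‖ := by
          rw [norm_smul, norm_smul, Real.norm_eq_abs, Real.norm_eq_abs,
            abs_of_pos (inv_pos.2 hu0)]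
    _ ≤ 2 * ‖x - y‖ + (4 * (ε⁻¹ * ‖x - y‖)) * R := by
          have hui : u⁻¹ * u = 1 := inv_mul_cancel₀ hu0.ne'
          have e1 : u⁻¹ ≤ 2 := by
            nlinarith [mul_nonneg (le_of_lt (inv_pos.2 hu0)) (sub_nonneg.2 hux)]
          have e2 : |u⁻¹ - v⁻¹| ≤ 4 * (ε⁻¹ * ‖x - y‖) := by
            rw [inv_sub_inv hu0.ne' hv0.ne', abs_div, abs_of_pos (mul_pos hu0 hv0)]
            have hnum : |v - u| ≤ ε⁻¹ * ‖x - y‖ := by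
              have h3 := hgdist (y - z) (x - z)
              rw [sub_sub_sub_cancel_right, norm_sub_rev] at h3
              exact h3
            have hquart : (1:ℝ)/4 ≤ u * v := by nlinarith
            calc |v - u| / (u * v) ≤ (ε⁻¹ * ‖x - y‖) / (1/4) :=
                div_le_div₀ (by positivity) hnum (by norm_num) hquart
            _ = 4 * (ε⁻¹ * ‖x - y‖) := by ring
          exact add_le_add (mul_le_mul_of_nonneg_right e1 (norm_nonneg _))
            (mul_le_mul e2 hyR (norm_nonneg _) (by positivity))
    _ = (2 + 4 * ε⁻¹ * R) * ‖x - y‖ := by ring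
  -- P maps the closed ball into the ball of radius ρ around a
  have hPW : ∀ x ∈ Metric.closedBall a δ, P x ∈ Metric.ball a ρ := by
    intro x hx
    obtain ⟨hux, hux', hxR⟩ := hgx x hx
    have hxa : ‖x - a‖ ≤ δ := by rwa [Metric.mem_closedBall, dist_eq_norm] at hx
    set u : ℝ := g (x - z) with hu
    have hu0 : (0:ℝ) < u := lt_of_lt_of_le (by norm_num) hux
    have h1 : ‖P x - x‖ = |u⁻¹ - 1| * ‖x - z‖ := by
      have hdiff : P x - x = (u⁻¹ - 1) • (x - z) := by
        rw [hP]; simp only; rw [← hu]; module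
      rw [hdiff, norm_smul, Real.norm_eq_abs]
    have h2 : |u⁻¹ - 1| ≤ 2 * (ε⁻¹ * δ) := by
      have hinv : u⁻¹ - 1 = (1 - u) / u := by field_simp
      rw [hinv, abs_div, abs_of_pos hu0]
      have hnum : |1 - u| ≤ ε⁻¹ * δ := by
        have h3 := hgdist (a - z) (x - z)
        rw [sub_sub_sub_cancel_right, hga, ← hu] at h3
        calc |1 - u| ≤ ε⁻¹ * ‖a - x‖ := h3
        _ ≤ ε⁻¹ * δ := by rw [norm_sub_rev]; gcongr
      calc |1 - u| / u ≤ (ε⁻¹ * δ) / (1/2) :=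
          div_le_div₀ (by positivity) hnum (by norm_num) hux
      _ = 2 * (ε⁻¹ * δ) := by ring
    rw [Metric.mem_ball, dist_eq_norm]
    have hεR : (0:ℝ) ≤ ε⁻¹ * R := by positivity
    calc ‖P x - a‖ = ‖(P x - x) + (x - a)‖ := by rw [sub_add_sub_cancel]
    _ ≤ ‖P x - x‖ + ‖x - a‖ := norm_add_le _ _
    _ ≤ 2 * (ε⁻¹ * δ) * R + δ := by
          refine add_le_add ?_ hxa
          rw [h1]
          exact mul_le_mul h2 hxR (norm_nonneg _) (by positivity)
    _ = δ * (2 * ε⁻¹ * R + 1) := by ring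
    _ < δ * (4 * ε⁻¹ * R + 2) := by
          have : 2 * ε⁻¹ * R + 1 < 4 * ε⁻¹ * R + 2 := by nlinarith
          exact mul_lt_mul_of_pos_left this hδpos
    _ ≤ ρ := hδρ
  -- the neighborhood
  have hNopen : IsOpen (U ∩ r ⁻¹' (Metric.ball a δ)) :=
    hU.inter (hr.isOpen_preimage (Metric.ball a δ) Metric.isOpen_ball)
  have hpN : p ∈ U ∩ r ⁻¹' (Metric.ball a δ) :=
    ⟨hpU, Metric.mem_ball_self (x := a) hδpos⟩
  refine ⟨U ∩ r ⁻¹' (Metric.ball a δ), hNopen, hpN, ?_⟩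
  rintro q ⟨hqU, hqb⟩
  set b : Euc n := r q with hb
  have hba : ‖b - a‖ < δ := by rwa [Set.mem_preimage, Metric.mem_ball, dist_eq_norm] at hqb
  have hbV : b ∈ V := by
    have h1 : (↑(e ⟨q, hqU⟩) : Euc n) = b := he ⟨q, hqU⟩
    exact h1 ▸ (e ⟨q, hqU⟩).2
  have hbfr : b ∈ frontier K := hVfr hbV
  have hgb : g (b - z) = 1 := by rw [← hfr, sub_add_cancel]; exact hbfr
  -- the segment and its projection
  set ℓ : ℝ → Euc n := fun t => a + t • (b - a) with hℓ
  have hℓmem : ∀ t ∈ Icc (0:ℝ) 1, ℓ t ∈ Metric.closedBall a δ := by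
    intro t ht
    rw [Metric.mem_closedBall, dist_eq_norm]
    have h1 : ℓ t - a = t • (b - a) := by rw [hℓ]; simp
    rw [h1, norm_smul, Real.norm_eq_abs, abs_of_nonneg ht.1]
    calc t * ‖b - a‖ ≤ 1 * ‖b - a‖ :=
        mul_le_mul_of_nonneg_right ht.2 (norm_nonneg _)
    _ = ‖b - a‖ := one_mul _
    _ ≤ δ := hba.le
  set f : ℝ → Euc n := fun t => P (ℓ t) with hf
  have hgl : ∀ t ∈ Icc (0:ℝ) 1, (1:ℝ)/2 ≤ g (ℓ t - z) :=
    fun t ht => (hgx _ (hℓmem t ht)).1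
  have hglne : ∀ t ∈ Icc (0:ℝ) 1, g (ℓ t - z) ≠ 0 :=
    fun t ht => ne_of_gt (lt_of_lt_of_le (by norm_num) (hgl t ht))
  have hf0 : f 0 = a := by
    have h1 : ℓ 0 = a := by rw [hℓ]; simp
    rw [hf]; simp only [h1]
    exact hPfix a hga
  have hf1 : f 1 = b := by
    have h1 : ℓ 1 = b := by rw [hℓ]; simp
    rw [hf]; simp only [h1]
    exact hPfix b hgb
  have hfV : ∀ t ∈ Icc (0:ℝ) 1, f t ∈ V := by
    intro t ht
    rw [hVW]
    exact ⟨hρW (hPW _ (hℓmem t ht)), hPfr _ (hglne t ht)⟩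
  have hℓc : Continuous ℓ := by
    rw [hℓ]; exact continuous_const.add (continuous_id.smul continuous_const)
  have hfcont : ContinuousOn f (Icc 0 1) := by
    rw [hf, hP]
    refine continuousOn_const.add (ContinuousOn.fun_smul ?_ ?_)
    · exact ContinuousOn.inv₀
        ((hLip.continuous.comp (hℓc.sub continuous_const)).continuousOn) hglne
    · exact (hℓc.sub continuous_const).continuousOn
  have hfbv : BoundedVariationOn f (Icc 0 1) := by
    have hlip : LipschitzOnWith (Real.toNNReal ((2 + 4 * ε⁻¹ * R) * ‖b - a‖)) f (Icc 0 1) := by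
      apply LipschitzOnWith.of_dist_le'
      intro t ht t' ht'
      rw [dist_eq_norm, Real.dist_eq]
      have hsub : ℓ t - ℓ t' = (t - t') • (b - a) := by rw [hℓ]; simp only; module
      calc ‖f t - f t'‖ ≤ (2 + 4 * ε⁻¹ * R) * ‖ℓ t - ℓ t'‖ :=
          hPdist _ (hℓmem t ht) _ (hℓmem t' ht')
      _ = (2 + 4 * ε⁻¹ * R) * ‖b - a‖ * |t - t'| := by
          rw [hsub, norm_smul, Real.norm_eq_abs]; ring
    have h1 := hlip.locallyBoundedVariationOn 0 1 (left_mem_Icc.2 zero_le_one)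
      (right_mem_Icc.2 zero_le_one)
    rwa [inter_self] at h1
  -- build the path
  have hmemV : ∀ t : unitInterval, f ↑t ∈ V := fun t => hfV _ t.2
  have hpe : e ⟨p, hpU⟩ = ⟨f ((0 : unitInterval) : ℝ), hmemV 0⟩ := by
    apply Subtype.ext
    rw [he ⟨p, hpU⟩]
    show a = f ((0 : unitInterval) : ℝ)
    rw [show ((0 : unitInterval) : ℝ) = (0:ℝ) from rfl, hf0]
  have hqe : e ⟨q, hqU⟩ = ⟨f ((1 : unitInterval) : ℝ), hmemV 1⟩ := by
    apply Subtype.ext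
    rw [he ⟨q, hqU⟩]
    show b = f ((1 : unitInterval) : ℝ)
    rw [show ((1 : unitInterval) : ℝ) = (1:ℝ) from rfl, hf1]
  set γ : Path p q :=
    { toFun := fun t => ((e.symm ⟨f ↑t, hmemV t⟩ : U) : M)
      continuous_toFun := by
        refine continuous_subtype_val.comp (e.symm.continuous.comp ?_)
        refine Continuous.subtype_mk ?_ _
        exact hfcont.comp_continuous continuous_subtype_val (fun t => t.2)
      source' := by
        show ((e.symm ⟨f ((0 : unitInterval) : ℝ), hmemV 0⟩ : U) : M) = p
        rw [← hpe, Homeomorph.symm_apply_apply]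
      target' := by
        show ((e.symm ⟨f ((1 : unitInterval) : ℝ), hmemV 1⟩ : U) : M) = q
        rw [← hqe, Homeomorph.symm_apply_apply] } with hγ
  refine ⟨γ, ?_⟩
  rw [pathLength_eq_real]
  have heq : EqOn (fun t : ℝ => r (γ.extend t)) f (Icc 0 1) := by
    intro t ht
    simp only
    rw [Path.extend_apply _ ht]
    show r ((e.symm ⟨f ↑(⟨t, ht⟩ : unitInterval), hmemV ⟨t, ht⟩⟩ : U) : M) = f t
    have h1 := he (e.symm ⟨f t, hmemV ⟨t, ht⟩⟩)
    rw [Homeomorph.apply_symm_apply] at h1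
    exact h1.symm
  rw [eVariationOn.eq_of_eqOn heq]
  exact Ne.lt_top hfbv

end Local

/-- **Lemma 4 (van Heijenoort).** Any two points of a connected locally convex
`(n-1)`-manifold in `ℝⁿ` can be joined by a path of finite length; in particular the
induced length pseudometric is finite and `M` is path-connected. -/
theorem connected_by_finite_length_arcs {n : ℕ} (hn : 3 ≤ n)
    {M : Type*} [TopologicalSpace M] [T2Space M] [ConnectedSpace M]
    (hman : IsTopManifoldOfDim M (n - 1))
    (r : M → Euc n) (hr : Continuous r)
    (hlc : ∀ p : M, IsLocallyConvexAt r p) :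
    (∀ p q : M, ∃ γ : Path p q, pathLength r γ < ⊤) ∧
    (∀ p q : M, lengthDist r p q < ⊤) ∧
    PathConnectedSpace M := by
  have key : ∀ p q : M, ∃ γ : Path p q, pathLength r γ < ⊤ := by
    intro p q
    set S : Set M := {q' | ∃ γ : Path p q', pathLength r γ < ⊤} with hS
    have hpS : p ∈ S := ⟨Path.refl p, by rw [pathLength_refl]; exact ENNReal.zero_lt_top⟩
    have hopen : IsOpen S := by
      rw [isOpen_iff_forall_mem_open]
      intro x hx
      obtain ⟨γ₁, hγ₁⟩ := hx
      obtain ⟨N, hNopen, hxN, hN⟩ := exists_good_nbhd r hr x (hlc x)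
      refine ⟨N, ?_, hNopen, hxN⟩
      intro y hy
      obtain ⟨σ, hσ⟩ := hN y hy
      exact ⟨γ₁.trans σ, by
        rw [pathLength_trans]; exact ENNReal.add_lt_top.2 ⟨hγ₁, hσ⟩⟩
    have hclosed : IsClosed S := by
      rw [← isOpen_compl_iff, isOpen_iff_forall_mem_open]
      intro x hx
      obtain ⟨N, hNopen, hxN, hN⟩ := exists_good_nbhd r hr x (hlc x)
      refine ⟨N, ?_, hNopen, hxN⟩
      intro y hy hyS
      apply hx
      obtain ⟨σ, hσ⟩ := hN y hy
      obtain ⟨γ₁, hγ₁⟩ := hyS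
      exact ⟨γ₁.trans σ.symm, by
        rw [pathLength_trans, pathLength_symm]; exact ENNReal.add_lt_top.2 ⟨hγ₁, hσ⟩⟩
    have huniv : S = univ := IsClopen.eq_univ ⟨hclosed, hopen⟩ ⟨p, hpS⟩
    rw [eq_univ_iff_forall] at huniv
    exact huniv q
  refine ⟨key, ?_, ?_⟩
  · intro p q
    obtain ⟨γ, hγ⟩ := key p q
    exact lt_of_le_of_lt (iInf_le _ γ) hγ
  · have hne : Nonempty M := inferInstance
    exact @PathConnectedSpace.mk M _ hne (fun p q => ⟨(key p q).choose⟩)
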